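/- Let G be a finite simple connected graph, let u and v be vertices with v ∈ F(u), and let X = { x ∈ N[u] : d(x,v) = e(u) }. Then there exists a set Y ⊆ V such that: v ∈ Y; Y is u-transitive; and d(y,x) ≤ d(v,x) for every y ∈ Y and every x ∈ X. -/

import Mathlib

variable {V : Type*}

/-- The closed neighbourhood `N[v]` of a vertex. -/
def closedNbhd (G : SimpleGraph V) (v : V) : Set V := insert v (G.neighborSet v)

/-- `N[S] = ⋃_{v ∈ S} N[v]`. -/
def closedNbhdSet (G : SimpleGraph V) (S : Set V) : Set V := ⋃ v ∈ S, closedNbhd G v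

/-- A vertex `v` is an extremity if the subgraph induced on `V \ N[v]` is
connected (possibly empty). -/
def IsExtremity (G : SimpleGraph V) (v : V) : Prop :=
  (G.induce (closedNbhd G v)ᶜ).Preconnected

/-- `M` is a module: every vertex outside `M` is adjacent to all of `M` or none of `M`. -/
def IsModuleSet (G : SimpleGraph V) (M : Set V) : Prop :=
  ∀ z ∉ M, ∀ x ∈ M, ∀ y ∈ M, (G.Adj z x ↔ G.Adj z y)

/-- A graph is prime if its only modules are `∅`, `V` and the singletons. -/
def IsPrimeGraph (G : SimpleGraph V) : Prop :=
  ∀ M : Set V, IsModuleSet G M → M = ∅ ∨ M = Set.univ ∨ ∃ v, M = {v}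

/-- Eccentricity of a vertex in a finite graph. -/
noncomputable def ecc [Fintype V] (G : SimpleGraph V) (u : V) : ℕ :=
  Finset.univ.sup (G.dist u)

/-- Diameter of a finite graph. -/
noncomputable def gdiam [Fintype V] (G : SimpleGraph V) : ℕ :=
  Finset.univ.sup fun u => ecc G u

/-- `u ⊥_w v`: vertices `u` and `v` lie in different connected components of the
subgraph induced on `V \ N[w]`. -/
def Perp (G : SimpleGraph V) (w u v : V) : Prop :=
  u ∉ closedNbhd G w ∧ v ∉ closedNbhd G w ∧
    ¬ ∃ p : G.Walk u v, ∀ z ∈ p.support, z ∉ closedNbhd G w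

/-- `S` is `u`-transitive: for every `x ∈ S` and vertex `y` distinct from and
nonadjacent to `x`, `x ⊥_y u` implies `y ∈ S`. -/
def UTransitive (G : SimpleGraph V) (u : V) (S : Set V) : Prop :=
  ∀ x ∈ S, ∀ y : V, y ≠ x → ¬ G.Adj x y → Perp G y x u → y ∈ S

/-- `S` is a dominating set: every vertex lies in `N[S]`. -/
def IsDominatingSet (G : SimpleGraph V) (S : Set V) : Prop :=
  ∀ v : V, ∃ s ∈ S, v ∈ closedNbhd G s

/-- `D` is a dominating target: every superset of `D` inducing a connected
subgraph is a dominating set. -/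
def IsDomTarget (G : SimpleGraph V) (D : Set V) : Prop :=
  ∀ S : Set V, D ⊆ S → (G.induce S).Connected → IsDominatingSet G S

/-- An asteroidal set: an independent set `A` such that for every `a ∈ A`, all
vertices of `A \ {a}` lie in a single connected component of the subgraph
induced on `V \ N[a]`. -/
def IsAsteroidalSet (G : SimpleGraph V) (A : Set V) : Prop :=
  (A.Pairwise fun x y => ¬ G.Adj x y) ∧
  ∀ a ∈ A, ∀ b ∈ A, ∀ c ∈ A, b ≠ a → c ≠ a →
    ∃ p : G.Walk b c, ∀ z ∈ p.support, z ∉ closedNbhd G a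

theorem stmt_13 [Fintype V] (G : SimpleGraph V) (hG : G.Connected)
    (u v : V) (hv : G.dist u v = ecc G u) :
    ∃ Y : Set V, v ∈ Y ∧ UTransitive G u Y ∧
      ∀ y ∈ Y, ∀ x ∈ closedNbhd G u, G.dist x v = ecc G u →
        G.dist y x ≤ G.dist v x := by
  refine ⟨{y | ∀ x ∈ closedNbhd G u, G.dist x v = ecc G u → G.dist y x ≤ G.dist v x},
    fun x _ _ => le_refl _, ?_, fun y hy => hy⟩
  classical
  rintro x' hx' y' hne hnadj ⟨hx'N, huN, hnowalk⟩
  intro x hx hxv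
  have hx'x : G.dist x' x ≤ G.dist v x := hx' x hx hxv
  refine le_trans ?_ hx'x
  -- build a walk from x' to u through x
  obtain ⟨p, hp⟩ := (hG x' x).exists_walk_length_eq_dist
  obtain ⟨r, hr⟩ : ∃ r : G.Walk x u, ∀ z ∈ r.support, z = x ∨ z = u := by
    rcases hx with rfl | hadj
    · exact ⟨SimpleGraph.Walk.nil, by simp⟩
    · exact ⟨(G.adj_symm hadj).toWalk, by simp [SimpleGraph.Walk.support_cons]⟩
  have key : ∃ z ∈ (p.append r).support, z ∈ closedNbhd G y' := by
    by_contra hc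
    push_neg at hc
    exact hnowalk ⟨p.append r, hc⟩
  obtain ⟨z, hzs, hzN⟩ := key
  have hzu : z ≠ u := fun h => huN (h ▸ hzN)
  have hzp : z ∈ p.support := by
    rw [SimpleGraph.Walk.mem_support_append_iff] at hzs
    rcases hzs with h | h
    · exact h
    · rcases hr z h with rfl | rfl
      · exact p.end_mem_support
      · exact absurd rfl hzu
  have hzx' : z ≠ x' := fun h => hx'N (h ▸ hzN)
  set t := p.takeUntil z hzp with ht
  set d := p.dropUntil z hzp with hd
  have hlen : t.length + d.length = p.length := by
    have := congrArg SimpleGraph.Walk.length (p.take_spec hzp)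
    rwa [SimpleGraph.Walk.length_append] at this
  have ht1 : 1 ≤ t.length := by
    rcases Nat.eq_zero_or_pos t.length with h0 | h1
    · exact absurd (SimpleGraph.Walk.eq_of_length_eq_zero h0) hzx'.symm
    · exact h1
  have hdzx : G.dist z x ≤ d.length := SimpleGraph.dist_le d
  have hy'z : G.dist y' z ≤ 1 := by
    rcases hzN with rfl | hadj
    · simp [SimpleGraph.dist_self]
    · exact SimpleGraph.dist_le (SimpleGraph.Adj.toWalk hadj)
  calc G.dist y' x ≤ G.dist y' z + G.dist z x := hG.dist_triangle
    _ ≤ 1 + d.length := Nat.add_le_add hy'z hdzx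
    _ ≤ t.length + d.length := Nat.add_le_add_right ht1 _
    _ = p.length := hlen
    _ = G.dist x' x := hp
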